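/- Existence of small sample sets by the probabilistic method: for every t and ε > 0 there exists a multiset S ⊆ {0,1}ᵗ of size s = O(t/ε²) such that for every subset T ⊆ {0,1}ᵗ that is 'simple' (member of a fixed family F of at most 2^t subsets), the fraction of elements of S in T differs from |T|/2ᵗ by at most ε. Concretely, s = ⌈(t+2)/(2ε²)⌉ suffices. -/

import Mathlib

open scoped Classical

open Real Finset

set_option maxHeartbeats 1000000

lemma bernoulli_mgf_bound (p : ℝ) (hp0 : 0 ≤ p) (hp1 : p ≤ 1) (x : ℝ) :
    (1 - p) * Real.exp (-(x * p)) + p * Real.exp (x * (1 - p)) ≤ Real.exp (x ^ 2 / 8) := by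
  obtain ⟨q, hq⟩ : ∃ q : ℝ, q = 1 - p := ⟨_, rfl⟩
  rw [← hq]
  have hq0 : 0 ≤ q := by rw [hq]; linarith
  -- the functions
  set g : ℝ → ℝ := fun y => q * Real.exp (-(y * p)) + p * Real.exp (y * q) with hgdef
  set D1 : ℝ → ℝ := fun y => q * (Real.exp (-(y * p)) * (-p)) + p * (Real.exp (y * q) * q)
    with hD1def
  set D2 : ℝ → ℝ := fun y => q * (Real.exp (-(y * p)) * (-p) * (-p)) + p * (Real.exp (y * q) * q * q)
    with hD2def
  have hgpos : ∀ y, 0 < g y := by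
    intro y
    simp only [hgdef]
    rcases le_total (Real.exp (-(y * p))) (Real.exp (y * q)) with hAB | hAB
    · nlinarith [Real.exp_pos (-(y * p)), mul_le_mul_of_nonneg_left hAB hp0]
    · nlinarith [Real.exp_pos (y * q), mul_le_mul_of_nonneg_left hAB hq0]
  have hgd : ∀ y, HasDerivAt g (D1 y) y := by
    intro y
    have h1 : HasDerivAt (fun y : ℝ => Real.exp (-(y * p))) (Real.exp (-(y * p)) * (-p)) y := by
      have := (((hasDerivAt_id y).mul_const p).neg).exp
      simpa using this
    have h2 : HasDerivAt (fun y : ℝ => Real.exp (y * q)) (Real.exp (y * q) * q) y := by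
      have := ((hasDerivAt_id y).mul_const q).exp
      simpa using this
    simpa [hgdef, hD1def, Pi.add_def] using (h1.const_mul q).add (h2.const_mul p)
  have hD1d : ∀ y, HasDerivAt D1 (D2 y) y := by
    intro y
    have h1 : HasDerivAt (fun y : ℝ => Real.exp (-(y * p))) (Real.exp (-(y * p)) * (-p)) y := by
      have := (((hasDerivAt_id y).mul_const p).neg).exp
      simpa using this
    have h2 : HasDerivAt (fun y : ℝ => Real.exp (y * q)) (Real.exp (y * q) * q) y := by
      have := ((hasDerivAt_id y).mul_const q).exp
      simpa using this
    simpa [hD1def, hD2def, Pi.add_def] using ((h1.mul_const (-p)).const_mul q).add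
      ((h2.mul_const q).const_mul p)
  -- φ = D1 / g
  set φ : ℝ → ℝ := fun y => D1 y / g y with hφdef
  have hφd : ∀ y, HasDerivAt φ ((D2 y * g y - D1 y * D1 y) / (g y) ^ 2) y := by
    intro y
    exact (hD1d y).div (hgd y) (hgpos y).ne'
  have hφd_le : ∀ y, (D2 y * g y - D1 y * D1 y) / (g y) ^ 2 ≤ 1 / 4 := by
    intro y
    rw [div_le_iff₀ (pow_pos (hgpos y) 2)]
    have key : D2 y * g y - D1 y * D1 y
        = p * q * Real.exp (-(y * p)) * Real.exp (y * q) := by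
      simp only [hD1def, hD2def, hgdef, hq]; ring
    rw [key]
    have hgy : g y = q * Real.exp (-(y * p)) + p * Real.exp (y * q) := rfl
    rw [hgy]
    nlinarith [sq_nonneg (q * Real.exp (-(y * p)) - p * Real.exp (y * q)),
      Real.exp_pos (-(y * p)), Real.exp_pos (y * q)]
  -- ψ = x/4 - φ is monotone, ψ 0 = 0
  set ψ : ℝ → ℝ := fun y => y / 4 - φ y with hψdef
  have hψd : ∀ y, HasDerivAt ψ (1 / 4 - (D2 y * g y - D1 y * D1 y) / (g y) ^ 2) y := by
    intro y
    simpa [hψdef, Pi.sub_def] using ((hasDerivAt_id y).div_const 4).sub (hφd y)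
  have hψmono : Monotone ψ := by
    apply monotone_of_deriv_nonneg (fun y => (hψd y).differentiableAt)
    intro y
    rw [(hψd y).deriv]
    linarith [hφd_le y]
  have hD10 : D1 0 = 0 := by
    simp only [hD1def]
    simp [Real.exp_zero]
    ring
  have hψ0 : ψ 0 = 0 := by
    simp [hψdef, hφdef, hD10]
  -- F = x^2/8 - log (g x)
  set F : ℝ → ℝ := fun y => y ^ 2 / 8 - Real.log (g y) with hFdef
  have hFd : ∀ y, HasDerivAt F (ψ y) y := by
    intro y
    have hlog : HasDerivAt (fun y => Real.log (g y)) (D1 y / g y) y :=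
      (hgd y).log (hgpos y).ne'
    have hsq : HasDerivAt (fun y : ℝ => y ^ 2 / 8) (y / 4) y := by
      have := ((hasDerivAt_pow 2 y).div_const 8)
      simpa using this.congr_deriv (by ring)
    simpa [hFdef, hψdef, hφdef, Pi.sub_def] using hsq.sub hlog
  have hF0 : F 0 = 0 := by
    simp [hFdef, hgdef, hq]
  have hFnonneg : ∀ y, 0 ≤ F y := by
    intro y
    have hFc : Continuous F := by
      have : Differentiable ℝ F := fun y => (hFd y).differentiableAt
      exact this.continuous
    rcases le_total 0 y with hy | hy
    · have : MonotoneOn F (Set.Ici 0) := by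
        apply monotoneOn_of_deriv_nonneg (convex_Ici 0) hFc.continuousOn
          (fun y _ => (hFd y).differentiableAt.differentiableWithinAt)
        intro z hz
        rw [(hFd z).deriv]
        rw [interior_Ici] at hz
        calc (0:ℝ) = ψ 0 := hψ0.symm
          _ ≤ ψ z := hψmono hz.le
      have := this (Set.self_mem_Ici) (Set.mem_Ici.mpr hy) hy
      rwa [hF0] at this
    · have : AntitoneOn F (Set.Iic 0) := by
        apply antitoneOn_of_deriv_nonpos (convex_Iic 0) hFc.continuousOn
          (fun y _ => (hFd y).differentiableAt.differentiableWithinAt)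
        intro z hz
        rw [(hFd z).deriv]
        rw [interior_Iic] at hz
        calc ψ z ≤ ψ 0 := hψmono hz.le
          _ = 0 := hψ0
      have := this (Set.mem_Iic.mpr hy) (Set.self_mem_Iic) hy
      rwa [hF0] at this
  have := hFnonneg x
  have hlog : Real.log (g x) ≤ x ^ 2 / 8 := by simp only [hFdef] at this; linarith
  have := (Real.log_le_iff_le_exp (hgpos x)).mp hlog
  simpa [hgdef, hq, add_comm] using this

lemma chernoff_count {α : Type*} [Fintype α] [DecidableEq α] [Nonempty α] (T : Finset α) (s : ℕ)
    (ε : ℝ) (hε : 0 < ε) :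
    ((Finset.univ.filter fun r : Fin s → α =>
        (s : ℝ) * ((T.card : ℝ) / (Fintype.card α : ℝ)) + s * ε
          ≤ ((Finset.univ.filter fun i => r i ∈ T).card : ℝ)).card : ℝ)
      ≤ (Fintype.card α : ℝ) ^ s * Real.exp (-(2 * s * ε ^ 2)) := by
  have hn : (0:ℝ) < (Fintype.card α : ℝ) := by
    exact_mod_cast Fintype.card_pos
  set n : ℝ := (Fintype.card α : ℝ) with hndef
  set p : ℝ := (T.card : ℝ) / n with hpdef
  have hp0 : 0 ≤ p := by positivity
  have hp1 : p ≤ 1 := by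
    rw [hpdef, div_le_one hn, hndef]
    exact_mod_cast Finset.card_le_univ T
  set θ : ℝ := 4 * ε with hθdef
  have hθ : 0 < θ := by positivity
  set f : α → ℝ := fun x => Real.exp (θ * ((if x ∈ T then (1:ℝ) else 0) - p)) with hfdef
  set cnt : (Fin s → α) → ℝ :=
    fun r => ((Finset.univ.filter fun i => r i ∈ T).card : ℝ) with hcntdef
  -- count as a sum
  have hcnt_sum : ∀ r : Fin s → α, cnt r = ∑ i : Fin s, (if r i ∈ T then (1:ℝ) else 0) := by
    intro r
    simp only [hcntdef]
    rw [Finset.card_filter]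
    push_cast
    rfl
  -- mgf factorization
  have key1 : ∀ r : Fin s → α, Real.exp (θ * (cnt r - s * p)) = ∏ i : Fin s, f (r i) := by
    intro r
    have : θ * (cnt r - s * p) = ∑ i : Fin s, θ * ((if r i ∈ T then (1:ℝ) else 0) - p) := by
      rw [← Finset.mul_sum, Finset.sum_sub_distrib, ← hcnt_sum r, Finset.sum_const,
        Finset.card_univ, Fintype.card_fin, nsmul_eq_mul]
    rw [this, Real.exp_sum]
  have key2 : ∑ r : Fin s → α, ∏ i : Fin s, f (r i) = (∑ x : α, f x) ^ s := by
    rw [← Fintype.piFinset_univ, ← Finset.prod_univ_sum]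
    rw [Finset.prod_const, Finset.card_univ, Fintype.card_fin]
  have key3 : ∑ x : α, f x ≤ n * Real.exp (θ ^ 2 / 8) := by
    have hsplit : ∑ x : α, f x
        = (T.card : ℝ) * Real.exp (θ * (1 - p))
          + ((Fintype.card α : ℝ) - T.card) * Real.exp (θ * (0 - p)) := by
      rw [← Finset.sum_filter_add_sum_filter_not Finset.univ (· ∈ T)]
      have h1 : ∀ x ∈ Finset.univ.filter (· ∈ T), f x = Real.exp (θ * (1 - p)) := by
        intro x hx
        simp only [Finset.mem_filter] at hx
        simp [hfdef, hx.2]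
      have h2 : ∀ x ∈ Finset.univ.filter (fun x => ¬ x ∈ T), f x = Real.exp (θ * (0 - p)) := by
        intro x hx
        simp only [Finset.mem_filter] at hx
        simp [hfdef, hx.2]
      rw [Finset.sum_congr rfl h1, Finset.sum_congr rfl h2, Finset.sum_const, Finset.sum_const]
      have hc1 : (Finset.univ.filter (· ∈ T)).card = T.card := by
        congr 1
        ext x
        simp
      have hc2 : ((Finset.univ.filter (fun x => ¬ x ∈ T)).card : ℝ)
          = (Fintype.card α : ℝ) - T.card := by
        have := Finset.card_filter_add_card_filter_not (s := (Finset.univ : Finset α))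
          (p := (· ∈ T))
        rw [hc1] at this
        have : T.card + (Finset.univ.filter (fun x => ¬ x ∈ T)).card = Fintype.card α := by
          simpa [Finset.card_univ] using this
        push_cast [← this]
        ring
      rw [hc1, nsmul_eq_mul, nsmul_eq_mul, hc2]
    rw [hsplit]
    have hTn : (T.card : ℝ) = p * n := by
      rw [hpdef]; field_simp
    have hbern := bernoulli_mgf_bound p hp0 hp1 θ
    have hrw : (T.card : ℝ) * Real.exp (θ * (1 - p))
          + ((Fintype.card α : ℝ) - T.card) * Real.exp (θ * (0 - p))
        = n * ((1 - p) * Real.exp (-(θ * p)) + p * Real.exp (θ * (1 - p))) := by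
      rw [hTn]
      have : θ * (0 - p) = -(θ * p) := by ring
      rw [this, ← hndef]
      ring
    rw [hrw]
    exact mul_le_mul_of_nonneg_left hbern hn.le
  -- Markov
  set E := Finset.univ.filter fun r : Fin s → α => (s : ℝ) * p + s * ε ≤ cnt r with hEdef
  have markov : (E.card : ℝ) * Real.exp (θ * (s * ε)) ≤ ∑ r : Fin s → α, Real.exp (θ * (cnt r - s * p)) := by
    calc (E.card : ℝ) * Real.exp (θ * (s * ε))
        = ∑ _r ∈ E, Real.exp (θ * (s * ε)) := by rw [Finset.sum_const, nsmul_eq_mul]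
      _ ≤ ∑ r ∈ E, Real.exp (θ * (cnt r - s * p)) := by
          apply Finset.sum_le_sum
          intro r hr
          rw [hEdef, Finset.mem_filter] at hr
          have : s * ε ≤ cnt r - s * p := by linarith [hr.2]
          exact Real.exp_le_exp.mpr (mul_le_mul_of_nonneg_left this hθ.le)
      _ ≤ ∑ r : Fin s → α, Real.exp (θ * (cnt r - s * p)) := by
          apply Finset.sum_le_sum_of_subset_of_nonneg (Finset.filter_subset _ _)
          intro r _ _
          exact (Real.exp_pos _).le
  have hsum_le : ∑ r : Fin s → α, Real.exp (θ * (cnt r - s * p))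
      ≤ n ^ s * Real.exp (s * (θ ^ 2 / 8)) := by
    calc ∑ r : Fin s → α, Real.exp (θ * (cnt r - s * p))
        = (∑ x : α, f x) ^ s := by
          rw [← key2]
          exact Finset.sum_congr rfl fun r _ => key1 r
      _ ≤ (n * Real.exp (θ ^ 2 / 8)) ^ s := by
          apply pow_le_pow_left₀ (Finset.sum_nonneg fun x _ => (Real.exp_pos _).le) key3
      _ = n ^ s * Real.exp (s * (θ ^ 2 / 8)) := by
          rw [mul_pow, ← Real.exp_nat_mul]
  have final : (E.card : ℝ) ≤ n ^ s * Real.exp (-(2 * s * ε ^ 2)) := by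
    have h1 : (E.card : ℝ) * Real.exp (θ * (s * ε)) ≤ n ^ s * Real.exp (s * (θ ^ 2 / 8)) :=
      le_trans markov hsum_le
    have h2 : (E.card : ℝ) ≤ n ^ s * Real.exp (s * (θ ^ 2 / 8)) / Real.exp (θ * (s * ε)) := by
      rw [le_div_iff₀ (Real.exp_pos _)]
      exact h1
    calc (E.card : ℝ) ≤ n ^ s * Real.exp (s * (θ ^ 2 / 8)) / Real.exp (θ * (s * ε)) := h2
      _ = n ^ s * Real.exp (s * (θ ^ 2 / 8) - θ * (s * ε)) := by
          rw [Real.exp_sub]; ring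
      _ = n ^ s * Real.exp (-(2 * s * ε ^ 2)) := by
          congr 1
          rw [hθdef]
          ring_nf
  exact final

-- lower tail
lemma chernoff_count_low {α : Type*} [Fintype α] [DecidableEq α] [Nonempty α] (T : Finset α) (s : ℕ)
    (ε : ℝ) (hε : 0 < ε) :
    ((Finset.univ.filter fun r : Fin s → α =>
        ((Finset.univ.filter fun i => r i ∈ T).card : ℝ)
          ≤ (s : ℝ) * ((T.card : ℝ) / (Fintype.card α : ℝ)) - s * ε).card : ℝ)
      ≤ (Fintype.card α : ℝ) ^ s * Real.exp (-(2 * s * ε ^ 2)) := by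
  have hn : (0:ℝ) < (Fintype.card α : ℝ) := by exact_mod_cast Fintype.card_pos
  refine le_trans ?_ (chernoff_count Tᶜ s ε hε)
  have hsub : (Finset.univ.filter fun r : Fin s → α =>
        ((Finset.univ.filter fun i => r i ∈ T).card : ℝ)
          ≤ (s : ℝ) * ((T.card : ℝ) / (Fintype.card α : ℝ)) - s * ε)
      ⊆ (Finset.univ.filter fun r : Fin s → α =>
        (s : ℝ) * ((Tᶜ.card : ℝ) / (Fintype.card α : ℝ)) + s * ε
          ≤ ((Finset.univ.filter fun i => r i ∈ Tᶜ).card : ℝ)) := by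
    intro r hr
    rw [Finset.mem_filter] at hr ⊢
    refine ⟨Finset.mem_univ r, ?_⟩
    have hcompl : ((Finset.univ.filter fun i => r i ∈ Tᶜ).card : ℝ)
        = (s : ℝ) - ((Finset.univ.filter fun i => r i ∈ T).card : ℝ) := by
      have h := Finset.card_filter_add_card_filter_not
        (s := (Finset.univ : Finset (Fin s))) (p := fun i => r i ∈ T)
      have h2 : (Finset.univ.filter fun i => r i ∈ Tᶜ)
          = (Finset.univ.filter fun i => ¬ r i ∈ T) := by
        apply Finset.filter_congr
        intro i _
        simp [Finset.mem_compl]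
      rw [h2]
      have h3 : (Finset.univ.filter fun i => r i ∈ T).card
          + (Finset.univ.filter fun i => ¬ r i ∈ T).card = s := by
        simpa [Finset.card_univ] using h
      push_cast [← h3]
      ring
    have hcardc : (Tᶜ.card : ℝ) = (Fintype.card α : ℝ) - T.card := by
      rw [Finset.card_compl]
      have := Finset.card_le_univ T
      push_cast [Nat.cast_sub this]
      ring
    rw [hcompl, hcardc]
    have := hr.2
    have hdiv : ((Fintype.card α : ℝ) - ↑T.card) / (Fintype.card α : ℝ)
        = 1 - (T.card : ℝ) / (Fintype.card α : ℝ) := by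
      field_simp
    rw [hdiv]
    have hexp : (s : ℝ) * (1 - (T.card : ℝ) / (Fintype.card α : ℝ))
        = s - s * ((T.card : ℝ) / (Fintype.card α : ℝ)) := by ring
    rw [hexp]
    linarith
  exact_mod_cast Nat.cast_le.mpr (Finset.card_le_card hsub)

/-- Existence of small sample sets: for any family `𝓕` of at most `2ᵗ` subsets of
`{0,1}ᵗ`, there is a multiset (tuple) of `s = ⌈(t+2)/(2ε²)⌉` points whose empirical
fraction in every `T ∈ 𝓕` is within `ε` of `|T|/2ᵗ`. -/
theorem small_sample_set_exists (t : ℕ) (ε : ℝ) (hε : 0 < ε)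
    (𝓕 : Finset (Finset (Fin t → Bool))) (h𝓕 : 𝓕.card ≤ 2 ^ t) :
    ∃ r : Fin ⌈((t : ℝ) + 2) / (2 * ε ^ 2)⌉₊ → (Fin t → Bool),
      ∀ T ∈ 𝓕,
        |((Finset.univ.filter fun i => r i ∈ T).card : ℝ)
            / (⌈((t : ℝ) + 2) / (2 * ε ^ 2)⌉₊ : ℝ)
          - (T.card : ℝ) / 2 ^ t| ≤ ε := by
  set s : ℕ := ⌈((t : ℝ) + 2) / (2 * ε ^ 2)⌉₊ with hsdef
  have hcard : (Fintype.card (Fin t → Bool) : ℝ) = 2 ^ t := by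
    simp [Fintype.card_fun]
  have hspos : 0 < s := by
    rw [hsdef]
    apply Nat.ceil_pos.mpr
    positivity
  have hsR : (0:ℝ) < (s:ℝ) := by exact_mod_cast hspos
  have hsle : ((t : ℝ) + 2) / (2 * ε ^ 2) ≤ (s : ℝ) := Nat.le_ceil _
  have hsε : (t : ℝ) + 2 ≤ 2 * s * ε ^ 2 := by
    rw [div_le_iff₀ (by positivity)] at hsle
    linarith
  by_contra hno
  push_neg at hno
  -- bad sets
  set U : Finset (Fin t → Bool) → Finset (Fin s → (Fin t → Bool)) := fun T =>
    Finset.univ.filter fun r : Fin s → (Fin t → Bool) =>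
      (s : ℝ) * ((T.card : ℝ) / (Fintype.card (Fin t → Bool) : ℝ)) + s * ε
        ≤ ((Finset.univ.filter fun i => r i ∈ T).card : ℝ) with hUdef
  set L : Finset (Fin t → Bool) → Finset (Fin s → (Fin t → Bool)) := fun T =>
    Finset.univ.filter fun r : Fin s → (Fin t → Bool) =>
      ((Finset.univ.filter fun i => r i ∈ T).card : ℝ)
        ≤ (s : ℝ) * ((T.card : ℝ) / (Fintype.card (Fin t → Bool) : ℝ)) - s * ε with hLdef
  have cover : (Finset.univ : Finset (Fin s → (Fin t → Bool))) ⊆ 𝓕.biUnion (fun T => U T ∪ L T) := by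
    intro r _
    obtain ⟨T, hT, habs⟩ := hno r
    rw [Finset.mem_biUnion]
    refine ⟨T, hT, ?_⟩
    rw [Finset.mem_union]
    rw [← hcard] at habs
    set c : ℝ := ((Finset.univ.filter fun i => r i ∈ T).card : ℝ) with hcdef
    set pp : ℝ := (T.card : ℝ) / (Fintype.card (Fin t → Bool) : ℝ) with hppdef
    rcases lt_abs.mp habs with h | h
    · left
      simp only [hUdef, Finset.mem_filter]
      refine ⟨Finset.mem_univ r, ?_⟩
      have h2 : pp + ε < c / (s:ℝ) := by linarith
      have h3 : (pp + ε) * (s:ℝ) < c := (lt_div_iff₀ hsR).mp h2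
      nlinarith
    · right
      simp only [hLdef, Finset.mem_filter]
      refine ⟨Finset.mem_univ r, ?_⟩
      have h2 : c / (s:ℝ) < pp - ε := by linarith
      have h3 : c < (pp - ε) * (s:ℝ) := (div_lt_iff₀ hsR).mp h2
      nlinarith
  -- card counting
  set M : ℝ := (Fintype.card (Fin t → Bool) : ℝ) ^ s * Real.exp (-(2 * s * ε ^ 2)) with hMdef
  have hMnn : 0 ≤ M := by positivity
  have hcount : ((Fintype.card (Fin s → (Fin t → Bool)) : ℕ) : ℝ) ≤ ∑ T ∈ 𝓕, (((U T ∪ L T).card : ℕ) : ℝ) := by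
    have h1 : Fintype.card (Fin s → (Fin t → Bool)) ≤ ∑ T ∈ 𝓕, (U T ∪ L T).card := by
      rw [← Finset.card_univ]
      exact le_trans (Finset.card_le_card cover) (Finset.card_biUnion_le)
    exact_mod_cast h1
  have hterm : ∀ T ∈ 𝓕, (((U T ∪ L T).card : ℕ) : ℝ) ≤ 2 * M := by
    intro T _
    have h1 : ((U T ∪ L T).card : ℝ) ≤ ((U T).card : ℝ) + ((L T).card : ℝ) := by
      exact_mod_cast Finset.card_union_le (U T) (L T)
    have h2 : ((U T).card : ℝ) ≤ M := chernoff_count T s ε hε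
    have h3 : ((L T).card : ℝ) ≤ M := chernoff_count_low T s ε hε
    linarith
  have hpicard : ((Fintype.card (Fin s → (Fin t → Bool)) : ℕ) : ℝ) = (Fintype.card (Fin t → Bool) : ℝ) ^ s := by
    rw [Fintype.card_fun]
    push_cast
    simp
  have hchain : (Fintype.card (Fin t → Bool) : ℝ) ^ s ≤ ((2:ℝ) ^ t) * (2 * M) := by
    calc (Fintype.card (Fin t → Bool) : ℝ) ^ s = ((Fintype.card (Fin s → (Fin t → Bool)) : ℕ) : ℝ) := hpicard.symm
      _ ≤ ∑ T ∈ 𝓕, (((U T ∪ L T).card : ℕ) : ℝ) := hcount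
      _ ≤ ∑ _T ∈ 𝓕, 2 * M := Finset.sum_le_sum hterm
      _ = (𝓕.card : ℝ) * (2 * M) := by rw [Finset.sum_const, nsmul_eq_mul]
      _ ≤ ((2:ℝ) ^ t) * (2 * M) := by
          apply mul_le_mul_of_nonneg_right _ (by linarith)
          exact_mod_cast h𝓕
  -- contradiction
  have hE : Real.exp (-(2 * s * ε ^ 2)) ≤ Real.exp (-((t:ℝ) + 2)) :=
    Real.exp_le_exp.mpr (by linarith)
  have h2e : (2:ℝ) < Real.exp 1 := lt_trans (by norm_num) Real.exp_one_gt_d9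
  have hkey : (2:ℝ) ^ (t + 1) < Real.exp ((t:ℝ) + 2) := by
    calc (2:ℝ) ^ (t + 1) < Real.exp 1 ^ (t + 1) := by
          apply pow_lt_pow_left₀ h2e (by norm_num) (Nat.succ_ne_zero t)
      _ = Real.exp ((t + 1 : ℕ) : ℝ) := by
          rw [← Real.exp_nat_mul]
          norm_num
      _ < Real.exp ((t:ℝ) + 2) := by
          apply Real.exp_lt_exp.mpr
          push_cast
          linarith
  have hsmall : (2:ℝ) ^ t * (2 * Real.exp (-(2 * s * ε ^ 2))) < 1 := by
    have h1 : (2:ℝ) ^ t * (2 * Real.exp (-((t:ℝ) + 2))) < 1 := by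
      have hpos : (0:ℝ) < Real.exp ((t:ℝ) + 2) := Real.exp_pos _
      rw [Real.exp_neg]
      rw [show (2:ℝ)^t * (2 * (Real.exp ((t:ℝ)+2))⁻¹) = (2^t*2) / Real.exp ((t:ℝ)+2) by ring]
      rw [div_lt_one hpos]
      calc (2:ℝ)^t * 2 = 2 ^ (t + 1) := by ring
        _ < Real.exp ((t:ℝ) + 2) := hkey
    have h2 : (2:ℝ) ^ t * (2 * Real.exp (-(2 * s * ε ^ 2)))
        ≤ (2:ℝ) ^ t * (2 * Real.exp (-((t:ℝ) + 2))) := by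
      apply mul_le_mul_of_nonneg_left _ (by positivity)
      linarith
    linarith
  have hP : (0:ℝ) < (Fintype.card (Fin t → Bool) : ℝ) ^ s := by
    have : (0:ℝ) < (Fintype.card (Fin t → Bool) : ℝ) := by exact_mod_cast Fintype.card_pos
    positivity
  have hfinal : ((2:ℝ) ^ t) * (2 * M) < (Fintype.card (Fin t → Bool) : ℝ) ^ s := by
    rw [hMdef]
    calc ((2:ℝ) ^ t) * (2 * ((Fintype.card (Fin t → Bool) : ℝ) ^ s * Real.exp (-(2 * s * ε ^ 2))))
        = ((2:ℝ) ^ t * (2 * Real.exp (-(2 * s * ε ^ 2)))) * (Fintype.card (Fin t → Bool) : ℝ) ^ s := by ring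
      _ < 1 * (Fintype.card (Fin t → Bool) : ℝ) ^ s := by
          exact mul_lt_mul_of_pos_right hsmall hP
      _ = (Fintype.card (Fin t → Bool) : ℝ) ^ s := by ring
  linarith
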